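/- Suppose √d has continued fraction expansion with even period length k = 2l and palindromic period (a₁, …, a_{l−1}, a_l, a_{l−1}, …, a₁, 2a₀). Then q_{l−1} divides q_{k−2} + (−1)^{l−1}. -/

import Mathlib

/-- Iteration of the Gauss-type map producing the complete quotients of the
continued fraction expansion of `α`. -/
noncomputable def cfIter (α : ℝ) : ℕ → ℝ
  | 0 => α
  | n + 1 => (Int.fract (cfIter α n))⁻¹

/-- The `n`-th partial quotient of the continued fraction of `α`. -/
noncomputable def cfTerm (α : ℝ) (n : ℕ) : ℤ := ⌊cfIter α n⌋

/-- `t` is an eventual period of the sequence `f`. -/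
def EvPeriod (t : ℕ) (f : ℕ → ℤ) : Prop := ∃ N, ∀ n, N ≤ n → f (n + t) = f n

/-- `periodLen α` is the length of the periodic part of the continued fraction
expansion of `α`: the least positive eventual period of its partial quotients. -/
noncomputable def periodLen (α : ℝ) : ℕ := sInf {t | 0 < t ∧ EvPeriod t (cfTerm α)}

/-- Numerators `p_k` of the convergents of the continued fraction `[a 0; a 1, a 2, …]`. -/
def convP (a : ℕ → ℤ) : ℕ → ℤ
  | 0 => a 0
  | 1 => a 0 * a 1 + 1
  | n + 2 => a (n + 2) * convP a (n + 1) + convP a n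

/-- Denominators `q_k` of the convergents of the continued fraction `[a 0; a 1, a 2, …]`. -/
def convQ (a : ℕ → ℤ) : ℕ → ℤ
  | 0 => 1
  | 1 => a 1
  | n + 2 => a (n + 2) * convQ a (n + 1) + convQ a n


/-- Continuant `K(a_i, a_{i+1}, …, a_{i+n-1})` (a segment of length `n` starting at `i`). -/
def cont (a : ℕ → ℤ) (i : ℕ) : ℕ → ℤ
  | 0 => 1
  | 1 => a i
  | n + 2 => a (i + n + 1) * cont a i (n + 1) + cont a i n

lemma two_step {P : ℕ → Prop} (h0 : P 0) (h1 : P 1)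
    (hstep : ∀ n, P n → P (n + 1) → P (n + 2)) : ∀ n, P n :=
  fun n => (Nat.rec (motive := fun n => P n ∧ P (n + 1)) ⟨h0, h1⟩
    (fun n ih => ⟨ih.2, hstep n ih.1 ih.2⟩) n).1

lemma convQ_eq_cont (a : ℕ → ℤ) : ∀ n, convQ a n = cont a 1 n := by
  refine two_step (by simp [convQ, cont]) (by simp [convQ, cont]) (fun n ih1 ih2 => ?_)
  simp only [convQ, cont, ih1, ih2]
  ring_nf

lemma cont_split (a : ℕ → ℤ) (i m : ℕ) :
    ∀ n, cont a i (m + n + 2) =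
      cont a i (m + 1) * cont a (i + m + 1) (n + 1) + cont a i m * cont a (i + m + 2) n := by
  refine two_step ?_ ?_ (fun n ih1 ih2 => ?_)
  · simp [cont]; ring
  · show cont a i (m + 3) = _
    have h2 : cont a i (m + 1 + 2) = a (i + m + 2) * cont a i (m + 2) + cont a i (m + 1) := by
      simp only [cont]; ring_nf
    have h1 : cont a i (m + 2) = a (i + m + 1) * cont a i (m + 1) + cont a i m := by
      simp only [cont]
    rw [show m + 3 = m + 1 + 2 from rfl, h2, h1]
    simp only [cont]
    ring_nf
  · have e : cont a i (m + (n + 2) + 2) =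
        a (i + m + n + 3) * cont a i (m + n + 3) + cont a i (m + n + 2) := by
      rw [show m + (n + 2) + 2 = (m + n + 2) + 2 from by ring]
      simp only [cont]
      ring_nf
    rw [e, show m + n + 3 = m + (n+1) + 2 from by ring, ih2, ih1]
    simp only [cont]
    ring_nf

lemma cont_det (a : ℕ → ℤ) (i : ℕ) :
    ∀ n, cont a i (n + 2) * cont a (i + 1) n
      - cont a i (n + 1) * cont a (i + 1) (n + 1) = (-1) ^ n := by
  intro n
  induction n with
  | zero => simp [cont]; ring
  | succ n ih =>
    have e1 : cont a i (n + 3) = a (i + n + 2) * cont a i (n + 2) + cont a i (n + 1) := by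
      rw [show n + 3 = (n + 1) + 2 from rfl]; simp only [cont]; ring_nf
    have e2 : cont a (i + 1) (n + 2) =
        a (i + n + 2) * cont a (i + 1) (n + 1) + cont a (i + 1) n := by
      simp only [cont]; ring_nf
    rw [show n + 1 + 2 = n + 3 from rfl, e1, e2]
    linear_combination -ih

lemma cont_rev (a b : ℕ → ℤ) :
    ∀ n, ∀ i i', (∀ j, j < n → a (i + j) = b (i' + (n - 1 - j))) → cont a i n = cont b i' n := by
  refine two_step ?_ ?_ (fun n ih1 ih2 => ?_) <;> intro i i' h
  · rfl
  · simpa [cont] using h 0 (by omega)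
  · have hb : cont b i' (n + 2) = b i' * cont b (i' + 1) (n + 1) + cont b (i' + 2) n := by
      have := cont_split b i' 0 n
      simpa [cont] using this
    have ha1 : cont a i (n + 1) = cont b (i' + 1) (n + 1) := by
      refine ih2 i (i' + 1) (fun j hj => ?_)
      rw [h j (by omega), show i' + (n + 2 - 1 - j) = i' + 1 + (n + 1 - 1 - j) from by omega]
    have ha2 : cont a i n = cont b (i' + 2) n := by
      refine ih1 i (i' + 2) (fun j hj => ?_)
      rw [h j (by omega), show i' + (n + 2 - 1 - j) = i' + 2 + (n - 1 - j) from by omega]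
    have ht : a (i + n + 1) = b i' := by
      have := h (n + 1) (by omega)
      rw [show i + (n + 1) = i + n + 1 from by omega] at this
      simpa using this
    rw [hb, ← ha1, ← ha2, ← ht]; simp only [cont]

/-- If `√d` has even period `k = 2l` with palindromic period, then
`q (l-1)` divides `q (k-2) + (-1)^(l-1)`. -/
theorem stmt11 (d : ℕ) (hd : 0 < d) (hsq : ¬ IsSquare d) (l : ℕ) (hl : 1 ≤ l)
    (a : ℕ → ℤ) (ha : a = cfTerm (Real.sqrt d))
    (hper : periodLen (Real.sqrt d) = 2 * l)
    (hperiodic : ∀ n, 1 ≤ n → a (n + 2 * l) = a n)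
    (hpal : ∀ i, 1 ≤ i → i ≤ 2 * l - 1 → a i = a (2 * l - i))
    (hlast : a (2 * l) = 2 * a 0) :
    convQ a (l - 1) ∣ convQ a (2 * l - 2) + (-1) ^ (l - 1) := by
  match l, hl with
  | 1, _ =>
    simp [convQ]
  | 2, _ =>
    refine ⟨a 2, ?_⟩
    show convQ a 2 + (-1) ^ 1 = convQ a 1 * a 2
    simp [convQ]; ring
  | (m + 3), _ =>
    have h1 : m + 3 - 1 = m + 2 := by omega
    have h2 : 2 * (m + 3) - 2 = 2 * m + 4 := by omega
    rw [h1, h2, convQ_eq_cont, convQ_eq_cont]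
    -- splitting
    have split := cont_split a 1 (m + 1) (m + 1)
    rw [show m + 1 + (m + 1) + 2 = 2 * m + 4 from by ring,
        show (1 : ℕ) + (m + 1) + 1 = m + 3 from by ring,
        show (1 : ℕ) + (m + 1) + 2 = m + 4 from by ring,
        show m + 1 + 1 = m + 2 from rfl] at split
    -- reversal via palindrome
    have rev1 : cont a (m + 3) (m + 2) = cont a 2 (m + 2) := by
      refine cont_rev a a (m + 2) (m + 3) 2 (fun j hj => ?_)
      have := hpal (m + 3 + j) (by omega) (by omega)
      rw [this, show 2 * (m + 3) - (m + 3 + j) = 2 + (m + 2 - 1 - j) from by omega]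
    have rev2 : cont a (m + 4) (m + 1) = cont a 2 (m + 1) := by
      refine cont_rev a a (m + 1) (m + 4) 2 (fun j hj => ?_)
      have := hpal (m + 4 + j) (by omega) (by omega)
      rw [this, show 2 * (m + 3) - (m + 4 + j) = 2 + (m + 1 - 1 - j) from by omega]
    rw [rev1, rev2] at split
    have det := cont_det a 1 m
    rw [show (1 : ℕ) + 1 = 2 from rfl] at det
    refine ⟨cont a 2 (m + 2) + cont a 2 m, ?_⟩
    linear_combination split - det
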